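/- Suppose X and X′ are trees of spaces over oriented simplicial trees T and T′ respectively, and χ: T → T′ is an isomorphism of oriented trees. Suppose there exist M ≥ 1 and A ≥ 0 such that: (1) for each vertex v of T there is an (M,A)-quasi-isometry φ_v: X_v → X′_{χ(v)} together with a quasi-isometry coarse inverse φ̄_v: X′_{χ(v)} → X_v; (2) for every oriented edge e of T (including reversals of edges in E⁺), the set φ_{ι(e)}(X_e) is A-coarsely equivalent to X′_{χ(e)} in X′_{χ(ι(e))}, and φ̄_{ι(e)}(X′_{χ(e)}) is A-coarsely equivalent to X_e in X_{ι(e)}; (3) for every oriented edge e and every x ∈ X_e there exists x′ ∈ X′_{χ(e)} with d(φ_{ι(e)}(x), x′) ≤ A and d(φ_{τ(e)}(α_e(x)), α′_{χ(e)}(x′)) ≤ A; and (4) for every oriented edge e and every x′ ∈ X′_{χ(e)} there exists x ∈ X_e with d(φ̄_{ι(e)}(x′), x) ≤ A and d(φ̄_{τ(e)}(α′_{χ(e)}(x′)), α_e(x)) ≤ A. Then there is a quasi-isometry φ: X → X′ whose restriction to each vertex space X_v equals φ_v. -/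

import Mathlib

/-- The data of a tree of spaces over an oriented simplicial tree: an oriented graph with
vertex set `V`, oriented edge set `E` and endpoint maps `ι`, `τ`; a metric space `X v` for
each vertex; an edge space `Xe e ⊆ X (ι e)` for each oriented edge; an attaching map
`α e : X (ι e) → X (τ e)` (only its restriction to `Xe e` is relevant) and a coarse inverse
`β e : X (τ e) → X (ι e)` of it. -/
structure TreeOfSpacesData where
  V : Type
  E : Type
  ι : E → V
  τ : E → V
  X : V → Type
  met : ∀ v, MetricSpace (X v)
  Xe : ∀ e, Set (X (ι e))
  α : ∀ e, X (ι e) → X (τ e)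
  β : ∀ e, X (τ e) → X (ι e)

namespace TreeOfSpacesData

instance (T : TreeOfSpacesData) (v : T.V) : MetricSpace (T.X v) := T.met v

/-- The condition that `β e` is a coarse inverse of `α e` on the edge space, uniformly over
all edges: this is the defining condition of a tree of spaces. -/
def IsTreeOfSpaces (T : TreeOfSpacesData) : Prop :=
  ∃ C : ℝ, 0 ≤ C ∧
    (∀ e, ∀ x ∈ T.Xe e, dist (T.β e (T.α e x)) x ≤ C) ∧
    (∀ e, ∀ y ∈ T.α e '' T.Xe e, dist (T.α e (T.β e y)) y ≤ C)

/-- The underlying simple graph of the oriented graph `(V, E, ι, τ)`. -/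
def graph (T : TreeOfSpacesData) : SimpleGraph T.V where
  Adj u v := u ≠ v ∧ ∃ e : T.E, (T.ι e = u ∧ T.τ e = v) ∨ (T.ι e = v ∧ T.τ e = u)
  symm := by
    constructor
    rintro u v ⟨hne, e, h⟩
    exact ⟨hne.symm, e, h.symm⟩
  loopless := by
    constructor
    rintro v ⟨hne, -⟩
    exact hne rfl

/-- The oriented graph `(V, E, ι, τ)` is an oriented simplicial tree: the underlying simple
graph is a tree, there are no loops, and there are no multiple (or oppositely repeated)
edges. -/
def IsOrientedSimplicialTree (T : TreeOfSpacesData) : Prop :=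
  T.graph.IsTree ∧ (∀ e : T.E, T.ι e ≠ T.τ e) ∧
    ∀ e e' : T.E,
      ((T.ι e = T.ι e' ∧ T.τ e = T.τ e') ∨ (T.ι e = T.τ e' ∧ T.τ e = T.ι e')) → e = e'

/-- The points of the total space of a tree of spaces: the points of the vertex spaces,
together with the interior points `(x, t)`, `0 < t < 1`, of the rungs `{x} × [0,1]` over the
points `x` of the edge spaces.  (The endpoints `(x,0)` and `(x,1)` of a rung are identified
with `x ∈ X (ι e)` and `α e x ∈ X (τ e)` respectively, so this is exactly the quotient of
the disjoint union defining the total space.) -/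
inductive Pt (T : TreeOfSpacesData) : Type
  | vert (v : T.V) (x : T.X v) : Pt T
  | rung (e : T.E) (x : T.X (T.ι e)) (hx : x ∈ T.Xe e) (t : ℝ)
      (ht0 : 0 < t) (ht1 : t < 1) : Pt T

/-- `PieceDist T p q r` holds when `p` and `q` lie in a common piece (a vertex space or a
rung) in which their distance is `r`. -/
inductive PieceDist (T : TreeOfSpacesData) : Pt T → Pt T → ℝ → Prop
  | vert (v : T.V) (x y : T.X v) :
      PieceDist T (.vert v x) (.vert v y) (dist x y)
  | rung_rung (e : T.E) (x : T.X (T.ι e)) (hx : x ∈ T.Xe e) (s t : ℝ)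
      (hs0 : 0 < s) (hs1 : s < 1) (ht0 : 0 < t) (ht1 : t < 1) :
      PieceDist T (.rung e x hx s hs0 hs1) (.rung e x hx t ht0 ht1) |s - t|
  | bot_rung (e : T.E) (x : T.X (T.ι e)) (hx : x ∈ T.Xe e) (t : ℝ)
      (ht0 : 0 < t) (ht1 : t < 1) :
      PieceDist T (.vert (T.ι e) x) (.rung e x hx t ht0 ht1) t
  | top_rung (e : T.E) (x : T.X (T.ι e)) (hx : x ∈ T.Xe e) (t : ℝ)
      (ht0 : 0 < t) (ht1 : t < 1) :
      PieceDist T (.vert (T.τ e) (T.α e x)) (.rung e x hx t ht0 ht1) (1 - t)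
  | bot_top (e : T.E) (x : T.X (T.ι e)) (hx : x ∈ T.Xe e) :
      PieceDist T (.vert (T.ι e) x) (.vert (T.τ e) (T.α e x)) 1
  | symm {p q : Pt T} {r : ℝ} : PieceDist T p q r → PieceDist T q p r

/-- `ChainDist T p q r` holds when there is a chain from `p` to `q`, each consecutive pair of
points lying in a common piece, of total length `r`. -/
inductive ChainDist (T : TreeOfSpacesData) : Pt T → Pt T → ℝ → Prop
  | single {p q : Pt T} {r : ℝ} : PieceDist T p q r → ChainDist T p q r
  | cons {p q r : Pt T} {c c' : ℝ} :
      PieceDist T p q c → ChainDist T q r c' → ChainDist T p r (c + c')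

/-- The distance on the total space of a tree of spaces: the infimum of the lengths of chains
joining two points (with value `∞` if there is no chain). -/
noncomputable def tdist (T : TreeOfSpacesData) (p q : Pt T) : ENNReal :=
  ⨅ r : {r : ℝ // ChainDist T p q r}, ENNReal.ofReal r.1

lemma PieceDist.nonneg {T : TreeOfSpacesData} {p q : Pt T} {r : ℝ}
    (h : PieceDist T p q r) : 0 ≤ r := by
  induction h with
  | vert v x y => exact dist_nonneg
  | rung_rung => exact abs_nonneg _
  | bot_rung e x hx t ht0 ht1 => exact ht0.le
  | top_rung e x hx t ht0 ht1 => linarith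
  | bot_top => norm_num
  | symm _ ih => exact ih

lemma ChainDist.nonneg {T : TreeOfSpacesData} {p q : Pt T} {r : ℝ}
    (h : ChainDist T p q r) : 0 ≤ r := by
  induction h with
  | single h => exact h.nonneg
  | cons h _ ih => have := h.nonneg; linarith

lemma ChainDist.append {T : TreeOfSpacesData} {p q r : Pt T} {c c' : ℝ}
    (h : ChainDist T p q c) (h' : ChainDist T q r c') : ChainDist T p r (c + c') := by
  induction h with
  | single h => exact .cons h h'
  | cons hpd hch ih => rw [add_assoc]; exact .cons hpd (ih h')

lemma ChainDist.symm {T : TreeOfSpacesData} {p q : Pt T} {c : ℝ}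
    (h : ChainDist T p q c) : ChainDist T q p c := by
  induction h with
  | single h => exact .single h.symm
  | cons hpd _ ih => rw [add_comm]; exact ih.append (.single hpd.symm)

lemma tdist_le_chain {T : TreeOfSpacesData} {p q : Pt T} {r : ℝ}
    (h : ChainDist T p q r) : tdist T p q ≤ ENNReal.ofReal r :=
  iInf_le _ (⟨r, h⟩ : {r : ℝ // ChainDist T p q r})

lemma tdist_comm {T : TreeOfSpacesData} (p q : Pt T) : tdist T p q = tdist T q p := by
  refine le_antisymm ?_ ?_ <;>
  exact le_iInf fun r => tdist_le_chain r.2.symm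

lemma tdist_triangle' {T : TreeOfSpacesData} (p q r : Pt T) :
    tdist T p r ≤ tdist T p q + tdist T q r := by
  have h : tdist T p q + tdist T q r =
      ⨅ (i : {c : ℝ // ChainDist T p q c}) (j : {c : ℝ // ChainDist T q r c}),
        (ENNReal.ofReal i.1 + ENNReal.ofReal j.1) := by
    rw [tdist, tdist, ENNReal.iInf_add]
    exact iInf_congr fun i => ENNReal.add_iInf
  rw [h]
  exact le_iInf₂ fun i j => le_trans (tdist_le_chain (i.2.append j.2)) ENNReal.ofReal_add_le

lemma tdist_vert_le {T : TreeOfSpacesData} (v : T.V) (x y : T.X v) :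
    tdist T (.vert v x) (.vert v y) ≤ ENNReal.ofReal (dist x y) :=
  tdist_le_chain (.single (.vert v x y))

/-- generic cast helpers -/
lemma fn_cast_eq {α : Type} {Y Z : α → Type} (g : ∀ a, Y a → Z a) {a b : α} (h : a = b)
    (h1 : Y a = Y b) (h2 : Z a = Z b) (y : Y a) : g b (cast h1 y) = cast h2 (g a y) := by
  subst h; rfl

lemma dist_cast_eq (T : TreeOfSpacesData) {v w : T.V} (h : v = w) (h1 h2 : T.X v = T.X w)
    (a b : T.X v) : dist (cast h1 a) (cast h2 b) = dist a b := by
  subst h; rfl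

lemma vert_cast_eq (T : TreeOfSpacesData) {v w : T.V} (h : v = w) (h1 : T.X v = T.X w)
    (x : T.X v) : (Pt.vert w (cast h1 x) : Pt T) = Pt.vert v x := by
  subst h; rfl

lemma mem_Xe_cast (T : TreeOfSpacesData) {e e' : T.E} (h : e = e')
    (h1 : T.X (T.ι e) = T.X (T.ι e')) {x : T.X (T.ι e)} (hx : x ∈ T.Xe e) :
    cast h1 x ∈ T.Xe e' := by
  subst h; exact hx

lemma alpha_cast_eq (T : TreeOfSpacesData) {e e' : T.E} (h : e = e')
    (h1 : T.X (T.ι e) = T.X (T.ι e')) (h2 : T.X (T.τ e) = T.X (T.τ e'))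
    (x : T.X (T.ι e)) : T.α e' (cast h1 x) = cast h2 (T.α e x) := by
  subst h; rfl

/-- anchors -/
inductive Anc (T : TreeOfSpacesData) : (v : T.V) → T.X v → ℝ → Pt T → Prop
  | vert (v : T.V) (x y : T.X v) (d : ℝ) (h : dist x y ≤ d) : Anc T v x d (.vert v y)
  | bot (e : T.E) (x : T.X (T.ι e)) (hx : x ∈ T.Xe e) (t : ℝ) (ht0 : 0 < t) (ht1 : t < 1)
      (x0 : T.X (T.ι e)) (d : ℝ) (h : dist x0 x + t ≤ d) :
      Anc T (T.ι e) x0 d (.rung e x hx t ht0 ht1)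
  | top (e : T.E) (x : T.X (T.ι e)) (hx : x ∈ T.Xe e) (t : ℝ) (ht0 : 0 < t) (ht1 : t < 1)
      (y0 : T.X (T.τ e)) (d : ℝ) (h : dist y0 (T.α e x) + (1 - t) ≤ d) :
      Anc T (T.τ e) y0 d (.rung e x hx t ht0 ht1)

lemma Anc.nonneg {T : TreeOfSpacesData} {v : T.V} {x : T.X v} {d : ℝ} {p : Pt T}
    (h : Anc T v x d p) : 0 ≤ d := by
  induction h with
  | vert v x y d h => exact le_trans dist_nonneg h
  | bot e x hx t ht0 ht1 x0 d h => have := dist_nonneg (x := x0) (y := x); linarith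
  | top e x hx t ht0 ht1 y0 d h => have := dist_nonneg (x := y0) (y := T.α e x); linarith

lemma tdist_le_two {T : TreeOfSpacesData} {p1 p2 p3 : Pt T} {a b D : ℝ}
    (h1 : tdist T p1 p2 ≤ ENNReal.ofReal a) (h2 : tdist T p2 p3 ≤ ENNReal.ofReal b)
    (ha : 0 ≤ a) (hb : 0 ≤ b) (hD : a + b ≤ D) :
    tdist T p1 p3 ≤ ENNReal.ofReal D := by
  refine le_trans (tdist_triangle' p1 p2 p3) (le_trans (add_le_add h1 h2) ?_)
  rw [← ENNReal.ofReal_add ha hb]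
  exact ENNReal.ofReal_le_ofReal hD

lemma tdist_vert_self_le {T : TreeOfSpacesData} (v : T.V) (x : T.X v) {r : ℝ} (hr : 0 ≤ r) :
    tdist T (.vert v x) (.vert v x) ≤ ENNReal.ofReal r :=
  le_trans (tdist_vert_le v x x) (by simp [dist_self])

section Transport

variable {S S' : TreeOfSpacesData} {cV : S.V → S'.V} {cE : S.E → S'.E}
    (hi : ∀ e, S'.ι (cE e) = cV (S.ι e)) (ht : ∀ e, S'.τ (cE e) = cV (S.τ e))
    {f : ∀ v, S.X v → S'.X (cV v)} {L A₀ K : ℝ}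

lemma cross_bound
    (hcross : ∀ e, ∀ x ∈ S.Xe e, ∃ y ∈ S'.Xe (cE e),
      dist (f (S.ι e) x) (cast (congrArg S'.X (hi e)) y) ≤ A₀ ∧
      dist (f (S.τ e) (S.α e x)) (cast (congrArg S'.X (ht e)) (S'.α (cE e) y)) ≤ A₀)
    (e : S.E) {x : S.X (S.ι e)} (hx : x ∈ S.Xe e) :
    tdist S' (.vert (cV (S.ι e)) (f (S.ι e) x)) (.vert (cV (S.τ e)) (f (S.τ e) (S.α e x)))
      ≤ ENNReal.ofReal (1 + 2 * A₀) := by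
  obtain ⟨y, hy, hd1, hd2⟩ := hcross e x hx
  have hbt : PieceDist S' (.vert (cV (S.ι e)) (cast (congrArg S'.X (hi e)) y))
      (.vert (cV (S.τ e)) (cast (congrArg S'.X (ht e)) (S'.α (cE e) y))) 1 := by
    rw [vert_cast_eq S' (hi e), vert_cast_eq S' (ht e)]
    exact .bot_top (cE e) y hy
  have hch : ChainDist S' (.vert (cV (S.ι e)) (f (S.ι e) x))
      (.vert (cV (S.τ e)) (f (S.τ e) (S.α e x)))
      (dist (f (S.ι e) x) (cast (congrArg S'.X (hi e)) y) +
        (1 + dist (cast (congrArg S'.X (ht e)) (S'.α (cE e) y)) (f (S.τ e) (S.α e x)))) :=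
    .cons (.vert _ _ _) (.cons hbt (.single (.vert _ _ _)))
  refine le_trans (tdist_le_chain hch) (ENNReal.ofReal_le_ofReal ?_)
  rw [dist_comm] at hd2
  linarith

lemma cross_move (hA₀ : 0 ≤ A₀) (hL : 0 ≤ L)
    (hf : ∀ v (x y : S.X v), dist (f v x) (f v y) ≤ L * dist x y + A₀)
    (hcross : ∀ e, ∀ x ∈ S.Xe e, ∃ y ∈ S'.Xe (cE e),
      dist (f (S.ι e) x) (cast (congrArg S'.X (hi e)) y) ≤ A₀ ∧
      dist (f (S.τ e) (S.α e x)) (cast (congrArg S'.X (ht e)) (S'.α (cE e) y)) ≤ A₀)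
    (e : S.E) {x₀ : S.X (S.ι e)} (hx₀ : x₀ ∈ S.Xe e) (x : S.X (S.ι e)) :
    tdist S' (.vert (cV (S.ι e)) (f (S.ι e) x)) (.vert (cV (S.τ e)) (f (S.τ e) (S.α e x₀)))
      ≤ ENNReal.ofReal (L * dist x x₀ + (1 + 3 * A₀)) := by
  have h1 : tdist S' (.vert (cV (S.ι e)) (f (S.ι e) x)) (.vert (cV (S.ι e)) (f (S.ι e) x₀))
      ≤ ENNReal.ofReal (L * dist x x₀ + A₀) :=
    le_trans (tdist_vert_le _ _ _) (ENNReal.ofReal_le_ofReal (hf _ _ _))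
  refine tdist_le_two h1 (cross_bound hi ht hcross e hx₀) (by positivity) (by linarith) (by linarith)

lemma cross_move' (hA₀ : 0 ≤ A₀) (hL : 0 ≤ L)
    (hf : ∀ v (x y : S.X v), dist (f v x) (f v y) ≤ L * dist x y + A₀)
    (hcross : ∀ e, ∀ x ∈ S.Xe e, ∃ y ∈ S'.Xe (cE e),
      dist (f (S.ι e) x) (cast (congrArg S'.X (hi e)) y) ≤ A₀ ∧
      dist (f (S.τ e) (S.α e x)) (cast (congrArg S'.X (ht e)) (S'.α (cE e) y)) ≤ A₀)
    (e : S.E) {x₀ : S.X (S.ι e)} (hx₀ : x₀ ∈ S.Xe e) (y : S.X (S.τ e)) :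
    tdist S' (.vert (cV (S.τ e)) (f (S.τ e) y)) (.vert (cV (S.ι e)) (f (S.ι e) x₀))
      ≤ ENNReal.ofReal (L * dist y (S.α e x₀) + (1 + 3 * A₀)) := by
  have h1 : tdist S' (.vert (cV (S.τ e)) (f (S.τ e) y))
      (.vert (cV (S.τ e)) (f (S.τ e) (S.α e x₀)))
      ≤ ENNReal.ofReal (L * dist y (S.α e x₀) + A₀) :=
    le_trans (tdist_vert_le _ _ _) (ENNReal.ofReal_le_ofReal (hf _ _ _))
  have h2 : tdist S' (.vert (cV (S.τ e)) (f (S.τ e) (S.α e x₀)))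
      (.vert (cV (S.ι e)) (f (S.ι e) x₀)) ≤ ENNReal.ofReal (1 + 2 * A₀) := by
    rw [tdist_comm]; exact cross_bound hi ht hcross e hx₀
  refine tdist_le_two h1 h2 (by positivity) (by linarith) (by linarith)

end Transport

section Transport2

variable {S S' : TreeOfSpacesData} {cV : S.V → S'.V} {cE : S.E → S'.E}
    (hi : ∀ e, S'.ι (cE e) = cV (S.ι e)) (ht : ∀ e, S'.τ (cE e) = cV (S.τ e))
    {f : ∀ v, S.X v → S'.X (cV v)} {L A₀ K : ℝ}

lemma transport (hA₀ : 0 ≤ A₀) (hL : 0 ≤ L) (hKL : L ≤ K) (hK3 : 1 + 3 * A₀ ≤ K)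
    (hf : ∀ v (x y : S.X v), dist (f v x) (f v y) ≤ L * dist x y + A₀)
    (hcross : ∀ e, ∀ x ∈ S.Xe e, ∃ y ∈ S'.Xe (cE e),
      dist (f (S.ι e) x) (cast (congrArg S'.X (hi e)) y) ≤ A₀ ∧
      dist (f (S.τ e) (S.α e x)) (cast (congrArg S'.X (ht e)) (S'.α (cE e) y)) ≤ A₀)
    {p q : Pt S} {c : ℝ} (hpq : PieceDist S p q c) :
    (∀ v x d, Anc S v x d p → ∃ w y d', Anc S w y d' q ∧ 0 ≤ d' ∧ d' ≤ d + c ∧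
      tdist S' (.vert (cV v) (f v x)) (.vert (cV w) (f w y)) ≤
        ENNReal.ofReal (K * (d + c - d'))) ∧
    (∀ v x d, Anc S v x d q → ∃ w y d', Anc S w y d' p ∧ 0 ≤ d' ∧ d' ≤ d + c ∧
      tdist S' (.vert (cV v) (f v x)) (.vert (cV w) (f w y)) ≤
        ENNReal.ofReal (K * (d + c - d'))) := by
  induction hpq with
  | vert v xx yy =>
    constructor
    · rintro v0 x d h
      cases h with
      | vert _ _ _ _ hd =>
        have hd0 : 0 ≤ d := le_trans dist_nonneg hd
        have hd1 : 0 ≤ dist xx yy := dist_nonneg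
        exact ⟨v, x, d + dist xx yy,
          .vert v x yy _ (by have h5 := dist_triangle x xx yy; linarith),
          by linarith, le_rfl, tdist_vert_self_le _ _ (by nlinarith)⟩
    · rintro v0 x d h
      cases h with
      | vert _ _ _ _ hd =>
        have hd0 : 0 ≤ d := le_trans dist_nonneg hd
        have hd1 : 0 ≤ dist xx yy := dist_nonneg
        refine ⟨v, x, d + dist xx yy,
          .vert v x xx _ (by
            have h5 := dist_triangle x yy xx
            rw [dist_comm yy xx] at h5
            linarith),
          by linarith, le_rfl, tdist_vert_self_le _ _ (by nlinarith)⟩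
  | rung_rung e xx hxx s t hs0 hs1 ht0 ht1 =>
    have habs : t - s ≤ |s - t| := by rw [abs_sub_comm]; exact le_abs_self _
    have habs' : s - t ≤ |s - t| := le_abs_self _
    have habs0 : 0 ≤ |s - t| := abs_nonneg _
    constructor
    · rintro v0 x d h
      cases h with
      | bot _ _ _ _ _ _ x0 _ hd =>
        have hd0 : 0 ≤ d := by have h5 := dist_nonneg (x := x0) (y := xx); linarith
        exact ⟨S.ι e, x0, d + |s - t|,
          .bot e xx hxx t ht0 ht1 x0 _ (by linarith),
          by linarith, le_rfl, tdist_vert_self_le _ _ (by nlinarith)⟩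
      | top _ _ _ _ _ _ y0 _ hd =>
        have hd0 : 0 ≤ d := by have h5 := dist_nonneg (x := y0) (y := S.α e xx); linarith
        exact ⟨S.τ e, y0, d + |s - t|,
          .top e xx hxx t ht0 ht1 y0 _ (by linarith),
          by linarith, le_rfl, tdist_vert_self_le _ _ (by nlinarith)⟩
    · rintro v0 x d h
      cases h with
      | bot _ _ _ _ _ _ x0 _ hd =>
        have hd0 : 0 ≤ d := by have h5 := dist_nonneg (x := x0) (y := xx); linarith
        exact ⟨S.ι e, x0, d + |s - t|,
          .bot e xx hxx s hs0 hs1 x0 _ (by linarith),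
          by linarith, le_rfl, tdist_vert_self_le _ _ (by nlinarith)⟩
      | top _ _ _ _ _ _ y0 _ hd =>
        have hd0 : 0 ≤ d := by have h5 := dist_nonneg (x := y0) (y := S.α e xx); linarith
        exact ⟨S.τ e, y0, d + |s - t|,
          .top e xx hxx s hs0 hs1 y0 _ (by linarith),
          by linarith, le_rfl, tdist_vert_self_le _ _ (by nlinarith)⟩
  | bot_rung e xx hxx t ht0 ht1 =>
    constructor
    · rintro v0 x d h
      cases h with
      | vert _ _ _ _ hd =>
        have hd0 : 0 ≤ d := le_trans dist_nonneg hd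
        exact ⟨S.ι e, x, d + t,
          .bot e xx hxx t ht0 ht1 x _ (by linarith),
          by linarith, le_rfl, tdist_vert_self_le _ _ (by nlinarith)⟩
    · rintro v0 x d h
      cases h with
      | bot _ _ _ _ _ _ x0 _ hd =>
        have hdist0 : 0 ≤ dist x0 xx := dist_nonneg
        have hd0 : 0 ≤ d := by linarith
        exact ⟨S.ι e, x0, d + t,
          .vert _ x0 xx _ (by linarith),
          by linarith, le_rfl, tdist_vert_self_le _ _ (by nlinarith)⟩
      | top _ _ _ _ _ _ y0 _ hd =>
        have hdist0 : 0 ≤ dist y0 (S.α e xx) := dist_nonneg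
        have hd0 : 0 ≤ d := by linarith
        refine ⟨S.ι e, xx, 0, .vert _ xx xx _ (by simp), le_rfl, by linarith, ?_⟩
        refine le_trans (cross_move' hi ht hA₀ hL hf hcross e hxx y0)
          (ENNReal.ofReal_le_ofReal ?_)
        have h2 : L * dist y0 (S.α e xx) ≤ K * (d - 1 + t) := by nlinarith
        nlinarith
  | top_rung e xx hxx t ht0 ht1 =>
    constructor
    · rintro v0 x d h
      cases h with
      | vert _ _ _ _ hd =>
        have hd0 : 0 ≤ d := le_trans dist_nonneg hd
        exact ⟨S.τ e, x, d + (1 - t),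
          .top e xx hxx t ht0 ht1 x _ (by linarith),
          by linarith, le_rfl, tdist_vert_self_le _ _ (by nlinarith)⟩
    · rintro v0 x d h
      cases h with
      | top _ _ _ _ _ _ y0 _ hd =>
        have hdist0 : 0 ≤ dist y0 (S.α e xx) := dist_nonneg
        have hd0 : 0 ≤ d := by linarith
        exact ⟨S.τ e, y0, d + (1 - t),
          .vert _ y0 (S.α e xx) _ (by linarith),
          by linarith, le_rfl, tdist_vert_self_le _ _ (by nlinarith)⟩
      | bot _ _ _ _ _ _ x0 _ hd =>
        have hdist0 : 0 ≤ dist x0 xx := dist_nonneg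
        have hd0 : 0 ≤ d := by linarith
        refine ⟨S.τ e, S.α e xx, 0, .vert _ _ _ _ (by simp), le_rfl, by linarith, ?_⟩
        refine le_trans (cross_move hi ht hA₀ hL hf hcross e hxx x0)
          (ENNReal.ofReal_le_ofReal ?_)
        have h2 : L * dist x0 xx ≤ K * (d - t) := by nlinarith
        nlinarith
  | bot_top e xx hxx =>
    constructor
    · rintro v0 x d h
      cases h with
      | vert _ _ _ _ hd =>
        have hdist0 : 0 ≤ dist x xx := dist_nonneg
        have hd0 : 0 ≤ d := le_trans dist_nonneg hd
        refine ⟨S.τ e, S.α e xx, 0, .vert _ _ _ _ (by simp), le_rfl, by linarith, ?_⟩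
        refine le_trans (cross_move hi ht hA₀ hL hf hcross e hxx x)
          (ENNReal.ofReal_le_ofReal ?_)
        have h2 : L * dist x xx ≤ K * d := by nlinarith
        nlinarith
    · rintro v0 x d h
      cases h with
      | vert _ _ _ _ hd =>
        have hdist0 : 0 ≤ dist x (S.α e xx) := dist_nonneg
        have hd0 : 0 ≤ d := le_trans dist_nonneg hd
        refine ⟨S.ι e, xx, 0, .vert _ xx xx _ (by simp), le_rfl, by linarith, ?_⟩
        refine le_trans (cross_move' hi ht hA₀ hL hf hcross e hxx x)
          (ENNReal.ofReal_le_ofReal ?_)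
        have h2 : L * dist x (S.α e xx) ≤ K * d := by nlinarith
        nlinarith
  | symm h ih => exact ⟨ih.2, ih.1⟩

end Transport2

def Fmap {S S' : TreeOfSpacesData} (cV : S.V → S'.V) (f : ∀ v, S.X v → S'.X (cV v)) :
    Pt S → Pt S'
  | .vert v x => .vert (cV v) (f v x)
  | .rung e x _ _ _ _ => .vert (cV (S.ι e)) (f (S.ι e) x)

lemma canonical_anchor {S S' : TreeOfSpacesData} (cV : S.V → S'.V)
    (f : ∀ v, S.X v → S'.X (cV v)) (p : Pt S) :
    ∃ v x d, Anc S v x d p ∧ 0 ≤ d ∧ d ≤ 1 ∧ Fmap cV f p = .vert (cV v) (f v x) := by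
  cases p with
  | vert v x => exact ⟨v, x, 0, .vert v x x 0 (by simp), le_rfl, zero_le_one, rfl⟩
  | rung e x hx t ht0 ht1 =>
    exact ⟨S.ι e, x, t, .bot e x hx t ht0 ht1 x t (by simp), ht0.le, ht1.le, rfl⟩

section Transport3

variable {S S' : TreeOfSpacesData} {cV : S.V → S'.V} {cE : S.E → S'.E}
    (hi : ∀ e, S'.ι (cE e) = cV (S.ι e)) (ht : ∀ e, S'.τ (cE e) = cV (S.τ e))
    {f : ∀ v, S.X v → S'.X (cV v)} {L A₀ K : ℝ}

lemma chain_transport (hA₀ : 0 ≤ A₀) (hL : 0 ≤ L) (hKL : L ≤ K) (hK3 : 1 + 3 * A₀ ≤ K)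
    (hf : ∀ v (x y : S.X v), dist (f v x) (f v y) ≤ L * dist x y + A₀)
    (hcross : ∀ e, ∀ x ∈ S.Xe e, ∃ y ∈ S'.Xe (cE e),
      dist (f (S.ι e) x) (cast (congrArg S'.X (hi e)) y) ≤ A₀ ∧
      dist (f (S.τ e) (S.α e x)) (cast (congrArg S'.X (ht e)) (S'.α (cE e) y)) ≤ A₀)
    {p q : Pt S} {r : ℝ} (hch : ChainDist S p q r) :
    ∀ v x d, Anc S v x d p → ∃ w y d', Anc S w y d' q ∧ 0 ≤ d' ∧ d' ≤ d + r ∧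
      tdist S' (.vert (cV v) (f v x)) (.vert (cV w) (f w y)) ≤
        ENNReal.ofReal (K * (d + r - d')) := by
  have hK0 : 0 ≤ K := by linarith
  induction hch with
  | single h => exact (transport hi ht hA₀ hL hKL hK3 hf hcross h).1
  | cons hpd hch ih =>
    intro v x d ha
    obtain ⟨w1, y1, d1, ha1, hd1n, hd1le, hb1⟩ :=
      (transport hi ht hA₀ hL hKL hK3 hf hcross hpd).1 v x d ha
    obtain ⟨w, y, d', ha2, hdn, hdle, hb2⟩ := ih w1 y1 d1 ha1
    refine ⟨w, y, d', ha2, hdn, by linarith, ?_⟩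
    refine le_trans (tdist_triangle' _ _ _) (le_trans (add_le_add hb1 hb2) ?_)
    rw [← ENNReal.ofReal_add (by nlinarith) (by nlinarith)]
    exact ENNReal.ofReal_le_ofReal (le_of_eq (by ring))

lemma flush (hA₀ : 0 ≤ A₀) (hL : 0 ≤ L) (hKL : L ≤ K) (hK3 : 1 + 3 * A₀ ≤ K)
    (hf : ∀ v (x y : S.X v), dist (f v x) (f v y) ≤ L * dist x y + A₀)
    (hcross : ∀ e, ∀ x ∈ S.Xe e, ∃ y ∈ S'.Xe (cE e),
      dist (f (S.ι e) x) (cast (congrArg S'.X (hi e)) y) ≤ A₀ ∧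
      dist (f (S.τ e) (S.α e x)) (cast (congrArg S'.X (ht e)) (S'.α (cE e) y)) ≤ A₀)
    {q : Pt S} {w y d'} (ha : Anc S w y d' q) :
    tdist S' (.vert (cV w) (f w y)) (Fmap cV f q) ≤
      ENNReal.ofReal (K * d' + (1 + 4 * A₀)) := by
  have hK0 : 0 ≤ K := by linarith
  have hdn : 0 ≤ d' := ha.nonneg
  cases ha with
  | vert _ _ z _ hd =>
    have h0 : 0 ≤ dist y z := dist_nonneg
    refine le_trans (tdist_vert_le _ _ _) (ENNReal.ofReal_le_ofReal ?_)
    have h5 := hf w y z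
    nlinarith
  | bot e xx hxx t ht0 ht1 y0 _ hd =>
    have h0 : 0 ≤ dist y0 xx := dist_nonneg
    refine le_trans (tdist_vert_le _ _ _) (ENNReal.ofReal_le_ofReal ?_)
    have h5 := hf (S.ι e) y0 xx
    nlinarith
  | top e xx hxx t ht0 ht1 y0 _ hd =>
    have h0 : 0 ≤ dist y0 (S.α e xx) := dist_nonneg
    refine le_trans (cross_move' hi ht hA₀ hL hf hcross e hxx y0)
      (ENNReal.ofReal_le_ofReal ?_)
    nlinarith

lemma generalBound (hA₀ : 0 ≤ A₀) (hL : 0 ≤ L) (hKL : L ≤ K) (hK3 : 1 + 3 * A₀ ≤ K)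
    (hf : ∀ v (x y : S.X v), dist (f v x) (f v y) ≤ L * dist x y + A₀)
    (hcross : ∀ e, ∀ x ∈ S.Xe e, ∃ y ∈ S'.Xe (cE e),
      dist (f (S.ι e) x) (cast (congrArg S'.X (hi e)) y) ≤ A₀ ∧
      dist (f (S.τ e) (S.α e x)) (cast (congrArg S'.X (ht e)) (S'.α (cE e) y)) ≤ A₀)
    {p q : Pt S} {r : ℝ} (hch : ChainDist S p q r) :
    tdist S' (Fmap cV f p) (Fmap cV f q) ≤
      ENNReal.ofReal (K * r + (2 * K + 1 + 4 * A₀)) := by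
  have hK0 : 0 ≤ K := by linarith
  have hr : 0 ≤ r := hch.nonneg
  obtain ⟨v, x, d0, ha, h0, h1, hFp⟩ := canonical_anchor cV f p
  obtain ⟨w, y, d', ha', hn, hle, hb⟩ :=
    chain_transport hi ht hA₀ hL hKL hK3 hf hcross hch v x d0 ha
  rw [hFp]
  exact tdist_le_two hb (flush hi ht hA₀ hL hKL hK3 hf hcross ha')
    (by nlinarith) (by nlinarith) (by nlinarith)

end Transport3

lemma ennreal_affine_le {c D B : ENNReal} (hc0 : c ≠ 0) (hct : c ≠ ⊤) {ι : Sort*}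
    (g : ι → ENNReal) (h : ∀ i, D ≤ c * g i + B) : D ≤ c * iInf g + B := by
  rw [← tsub_le_iff_right]
  have h1 : (D - B) / c ≤ iInf g := le_iInf fun i => by
    rw [ENNReal.div_le_iff_le_mul (Or.inl hc0) (Or.inl hct)]
    calc D - B ≤ c * g i := tsub_le_iff_right.mpr (h i)
      _ = g i * c := mul_comm _ _
  calc D - B = c * ((D - B) / c) := (ENNReal.mul_div_cancel hc0 hct).symm
    _ ≤ c * iInf g := mul_le_mul_right h1 c

lemma gdist {T T' : TreeOfSpacesData} (cF : T.V → T'.V)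
    (gb : ∀ v : T.V, T'.X (cF v) → T.X v) {v w : T.V} (h : v = w)
    {u : T'.V} (hu : u = cF v) (hu' : u = cF w)
    (y : T'.X u) (x : T.X v) (h2 : T.X v = T.X w) :
    dist (gb w (cast (congrArg T'.X hu') y)) (cast h2 x) =
      dist (gb v (cast (congrArg T'.X hu) y)) x := by
  subst h; rfl

lemma gdist' {T T' : TreeOfSpacesData} (cF : T.V → T'.V)
    (gb : ∀ v : T.V, T'.X (cF v) → T.X v) {v w : T.V} (h : v = w)
    {u : T'.V} (hu : u = cF v) (hu' : u = cF w)
    (y : T'.X u) (x : T.X v) (h2 : T.X w = T.X v) :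
    dist x (cast h2 (gb w (cast (congrArg T'.X hu') y))) =
      dist x (gb v (cast (congrArg T'.X hu) y)) := by
  subst h; rfl

lemma gdist3 {T' : TreeOfSpacesData} {u u' : T'.V} (h : u = u')
    (h1 : T'.X u = T'.X u') (h2 : T'.X u' = T'.X u) (y : T'.X u') (z : T'.X u) :
    dist y (cast h1 z) = dist (cast h2 y) z := by
  subst h; rfl

def Gf (T T' : TreeOfSpacesData) (χV : T.V ≃ T'.V)
    (φbar : ∀ v : T.V, T'.X (χV v) → T.X v) :
    ∀ v' : T'.V, T'.X v' → T.X (χV.symm v') :=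
  fun v' y => φbar (χV.symm v') (cast (congrArg T'.X (Equiv.apply_symm_apply χV v').symm) y)
end TreeOfSpacesData

open TreeOfSpacesData in
/-- A tree of quasi-isometries over an isomorphism of oriented trees yields a quasi-isometry
of the total spaces restricting on each vertex space to the given quasi-isometry.  Here
`χV, χE` form an isomorphism of the underlying oriented trees, `φ v` are uniform
`(M,A)`-quasi-isometries with coarse inverses `φbar v`, condition (2) (`h2`/`h2rev`) says the
image of each edge space is `A`-coarsely equivalent to the corresponding edge space of `T'`
(and likewise for `φbar`), and conditions (3) and (4) (`h3`,`h3rev`,`h4`,`h4rev`) say the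
attaching maps are intertwined up to error `A` (for each oriented edge and its reversal). -/
theorem tree_of_quasi_isometries_gives_quasi_isometry
    (T T' : TreeOfSpacesData)
    (htree : T.IsOrientedSimplicialTree) (htree' : T'.IsOrientedSimplicialTree)
    (hT : T.IsTreeOfSpaces) (hT' : T'.IsTreeOfSpaces)
    (χV : T.V ≃ T'.V) (χE : T.E ≃ T'.E)
    (hι : ∀ e : T.E, T'.ι (χE e) = χV (T.ι e))
    (hτ : ∀ e : T.E, T'.τ (χE e) = χV (T.τ e))
    (M A : ℝ) (hM : 1 ≤ M) (hA : 0 ≤ A)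
    (φ : ∀ v : T.V, T.X v → T'.X (χV v))
    (φbar : ∀ v : T.V, T'.X (χV v) → T.X v)
    -- (1) each `φ v` is an (M,A)-quasi-isometry with coarse inverse `φbar v`
    (hqi : ∀ (v : T.V) (x y : T.X v),
      dist x y / M - A ≤ dist (φ v x) (φ v y) ∧ dist (φ v x) (φ v y) ≤ M * dist x y + A)
    (hsurj : ∀ (v : T.V) (y : T'.X (χV v)), ∃ x : T.X v, dist y (φ v x) ≤ A)
    (hinv : ∀ v : T.V, (∀ x : T.X v, dist (φbar v (φ v x)) x ≤ A) ∧
      (∀ y : T'.X (χV v), dist (φ v (φbar v y)) y ≤ A))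
    -- (2) for each oriented edge
    (h2 : ∀ e : T.E,
      (∀ x ∈ T.Xe e, ∃ y ∈ T'.Xe (χE e),
        dist (φ (T.ι e) x) (cast (congrArg T'.X (hι e)) y) ≤ A) ∧
      (∀ y ∈ T'.Xe (χE e), ∃ x ∈ T.Xe e,
        dist (φ (T.ι e) x) (cast (congrArg T'.X (hι e)) y) ≤ A) ∧
      (∀ y ∈ T'.Xe (χE e), ∃ x ∈ T.Xe e,
        dist (φbar (T.ι e) (cast (congrArg T'.X (hι e)) y)) x ≤ A) ∧
      (∀ x ∈ T.Xe e, ∃ y ∈ T'.Xe (χE e),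
        dist (φbar (T.ι e) (cast (congrArg T'.X (hι e)) y)) x ≤ A))
    -- (2) for the reversal of each oriented edge
    (h2rev : ∀ e : T.E,
      (∀ x ∈ T.α e '' T.Xe e, ∃ y ∈ T'.α (χE e) '' T'.Xe (χE e),
        dist (φ (T.τ e) x) (cast (congrArg T'.X (hτ e)) y) ≤ A) ∧
      (∀ y ∈ T'.α (χE e) '' T'.Xe (χE e), ∃ x ∈ T.α e '' T.Xe e,
        dist (φ (T.τ e) x) (cast (congrArg T'.X (hτ e)) y) ≤ A) ∧
      (∀ y ∈ T'.α (χE e) '' T'.Xe (χE e), ∃ x ∈ T.α e '' T.Xe e,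
        dist (φbar (T.τ e) (cast (congrArg T'.X (hτ e)) y)) x ≤ A) ∧
      (∀ x ∈ T.α e '' T.Xe e, ∃ y ∈ T'.α (χE e) '' T'.Xe (χE e),
        dist (φbar (T.τ e) (cast (congrArg T'.X (hτ e)) y)) x ≤ A))
    -- (3) for each oriented edge and its reversal
    (h3 : ∀ e : T.E, ∀ x ∈ T.Xe e, ∃ y ∈ T'.Xe (χE e),
      dist (φ (T.ι e) x) (cast (congrArg T'.X (hι e)) y) ≤ A ∧
      dist (φ (T.τ e) (T.α e x)) (cast (congrArg T'.X (hτ e)) (T'.α (χE e) y)) ≤ A)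
    (h3rev : ∀ e : T.E, ∀ x ∈ T.α e '' T.Xe e, ∃ y ∈ T'.α (χE e) '' T'.Xe (χE e),
      dist (φ (T.τ e) x) (cast (congrArg T'.X (hτ e)) y) ≤ A ∧
      dist (φ (T.ι e) (T.β e x)) (cast (congrArg T'.X (hι e)) (T'.β (χE e) y)) ≤ A)
    -- (4) for each oriented edge and its reversal
    (h4 : ∀ e : T.E, ∀ y ∈ T'.Xe (χE e), ∃ x ∈ T.Xe e,
      dist (φbar (T.ι e) (cast (congrArg T'.X (hι e)) y)) x ≤ A ∧
      dist (φbar (T.τ e) (cast (congrArg T'.X (hτ e)) (T'.α (χE e) y))) (T.α e x) ≤ A)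
    (h4rev : ∀ e : T.E, ∀ y ∈ T'.α (χE e) '' T'.Xe (χE e), ∃ x ∈ T.α e '' T.Xe e,
      dist (φbar (T.τ e) (cast (congrArg T'.X (hτ e)) y)) x ≤ A ∧
      dist (φbar (T.ι e) (cast (congrArg T'.X (hι e)) (T'.β (χE e) y))) (T.β e x) ≤ A) :
    ∃ (M' A' : ℝ) (Φ : T.Pt → T'.Pt), 1 ≤ M' ∧ 0 ≤ A' ∧
      (∀ p q : T.Pt,
        T'.tdist (Φ p) (Φ q) ≤ ENNReal.ofReal M' * T.tdist p q + ENNReal.ofReal A') ∧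
      (∀ p q : T.Pt,
        T.tdist p q ≤ ENNReal.ofReal M' * T'.tdist (Φ p) (Φ q) + ENNReal.ofReal A') ∧
      (∀ q : T'.Pt, ∃ p : T.Pt, T'.tdist q (Φ p) ≤ ENNReal.ofReal A') ∧
      (∀ (v : T.V) (x : T.X v), Φ (.vert v x) = .vert (χV v) (φ v x)) := by

  have hM0 : (0:ℝ) < M := by linarith
  obtain ⟨AA, hAA⟩ : ∃ AA : ℝ, AA = 3 * M * A + A := ⟨_, rfl⟩
  obtain ⟨K1, hK1⟩ : ∃ K1 : ℝ, K1 = M + 3 * A + 1 := ⟨_, rfl⟩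
  obtain ⟨K2, hK2⟩ : ∃ K2 : ℝ, K2 = M + 3 * AA + 1 := ⟨_, rfl⟩
  have hAA0 : 0 ≤ AA := by rw [hAA]; nlinarith
  have hAge : A ≤ AA := by rw [hAA]; nlinarith
  have hK1ge : 1 ≤ K1 := by rw [hK1]; linarith
  have hK2ge : 1 ≤ K2 := by rw [hK2]; linarith
  obtain ⟨B1, hB1⟩ : ∃ B1 : ℝ, B1 = 2 * K1 + 1 + 4 * A := ⟨_, rfl⟩
  obtain ⟨B2, hB2⟩ : ∃ B2 : ℝ, B2 = 2 * K2 + 1 + 4 * AA := ⟨_, rfl⟩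
  have hB10 : 0 ≤ B1 := by rw [hB1]; linarith
  have hB20 : 0 ≤ B2 := by rw [hB2]; linarith
  obtain ⟨M', hM'⟩ : ∃ M' : ℝ, M' = K1 + K2 := ⟨_, rfl⟩
  obtain ⟨A', hA'⟩ : ∃ A' : ℝ, A' = B1 + B2 + 3 * (1 + A) := ⟨_, rfl⟩
  have hM'1 : 1 ≤ M' := by rw [hM']; linarith
  have hA'0 : 0 ≤ A' := by rw [hA']; linarith
  have hM'0 : (0:ℝ) ≤ M' := by linarith
  -- backward tree-iso data
  have hι' : ∀ e' : T'.E, T.ι (χE.symm e') = χV.symm (T'.ι e') := by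
    intro e'
    have h := hι (χE.symm e')
    rw [Equiv.apply_symm_apply] at h
    rw [h, Equiv.symm_apply_apply]
  have hτ' : ∀ e' : T'.E, T.τ (χE.symm e') = χV.symm (T'.τ e') := by
    intro e'
    have h := hτ (χE.symm e')
    rw [Equiv.apply_symm_apply] at h
    rw [h, Equiv.symm_apply_apply]
  -- φbar is coarse Lipschitz
  have hbar : ∀ (w : T.V) (a b : T'.X (χV w)),
      dist (φbar w a) (φbar w b) ≤ M * dist a b + AA := by
    intro w a b
    have h1 := (hqi w (φbar w a) (φbar w b)).1
    have t1 := (hinv w).2 a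
    have t2 := (hinv w).2 b
    have h4t := dist_triangle4 (φ w (φbar w a)) a b (φ w (φbar w b))
    rw [dist_comm b (φ w (φbar w b))] at h4t
    have h3' : dist (φbar w a) (φbar w b) / M ≤ dist a b + 3 * A := by linarith
    have h5 := (div_le_iff₀ hM0).mp h3'
    have h6 : 0 ≤ dist a b := dist_nonneg
    rw [hAA]
    nlinarith
  have hGlip : ∀ (v' : T'.V) (a b : T'.X v'),
      dist (Gf T T' χV φbar v' a) (Gf T T' χV φbar v' b) ≤ M * dist a b + AA := by
    intro v' a b
    have h5 := hbar (χV.symm v')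
      (cast (congrArg T'.X (Equiv.apply_symm_apply χV v').symm) a)
      (cast (congrArg T'.X (Equiv.apply_symm_apply χV v').symm) b)
    rw [dist_cast_eq T' (Equiv.apply_symm_apply χV v').symm _ _ a b] at h5
    exact h5
  -- backward crossing condition
  have hcross' : ∀ e' : T'.E, ∀ y ∈ T'.Xe e', ∃ x ∈ T.Xe (χE.symm e'),
      dist (Gf T T' χV φbar (T'.ι e') y) (cast (congrArg T.X (hι' e')) x) ≤ AA ∧
      dist (Gf T T' χV φbar (T'.τ e') (T'.α e' y))
        (cast (congrArg T.X (hτ' e')) (T.α (χE.symm e') x)) ≤ AA := by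
    intro e'
    obtain ⟨e, rfl⟩ : ∃ e, χE e = e' := ⟨χE.symm e', χE.apply_symm_apply e'⟩
    intro y hy
    obtain ⟨x, hx, hd1, hd2⟩ := h4 e y hy
    have hse : e = χE.symm (χE e) := (χE.symm_apply_apply e).symm
    refine ⟨cast (congrArg (fun e => T.X (T.ι e)) hse) x, mem_Xe_cast T hse _ hx, ?_, ?_⟩
    · have hw : T.ι e = χV.symm (T'.ι (χE e)) := by
        rw [hι e, Equiv.symm_apply_apply]
      show dist (φbar (χV.symm (T'.ι (χE e)))
        (cast (congrArg T'.X (Equiv.apply_symm_apply χV (T'.ι (χE e))).symm) y)) _ ≤ AA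
      rw [cast_cast]
      rw [gdist (fun v => χV v) φbar hw (hι e)
        (Equiv.apply_symm_apply χV (T'.ι (χE e))).symm]
      exact hd1.trans hAge
    · have hw : T.τ e = χV.symm (T'.τ (χE e)) := by
        rw [hτ e, Equiv.symm_apply_apply]
      show dist (φbar (χV.symm (T'.τ (χE e)))
        (cast (congrArg T'.X (Equiv.apply_symm_apply χV (T'.τ (χE e))).symm)
          (T'.α (χE e) y))) _ ≤ AA
      rw [alpha_cast_eq T hse (congrArg (fun e => T.X (T.ι e)) hse)
        (congrArg (fun e => T.X (T.τ e)) hse) x]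
      rw [cast_cast]
      rw [gdist (fun v => χV v) φbar hw (hτ e)
        (Equiv.apply_symm_apply χV (T'.τ (χE e))).symm]
      exact hd2.trans hAge
  -- the forward and backward chain bounds
  have fwd : ∀ {p q : T.Pt} {r : ℝ}, ChainDist T p q r →
      tdist T' (Fmap (fun v => χV v) φ p) (Fmap (fun v => χV v) φ q) ≤
        ENNReal.ofReal (K1 * r + (2 * K1 + 1 + 4 * A)) := by
    intro p q r hch
    exact generalBound hι hτ hA (by linarith) (by rw [hK1]; linarith)
      (by rw [hK1]; linarith) (fun v x y => (hqi v x y).2) h3 hch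
  have bwd : ∀ {p q : T'.Pt} {r : ℝ}, ChainDist T' p q r →
      tdist T (Fmap (fun v' => χV.symm v') (Gf T T' χV φbar) p)
        (Fmap (fun v' => χV.symm v') (Gf T T' χV φbar) q) ≤
        ENNReal.ofReal (K2 * r + (2 * K2 + 1 + 4 * AA)) := by
    intro p q r hch
    exact generalBound hι' hτ' hAA0 (by linarith) (by rw [hK2]; linarith)
      (by rw [hK2]; linarith) hGlip hcross' hch
  -- nearness of G ∘ Φ to the identity
  have near_vert : ∀ (v : T.V) (x : T.X v),
      tdist T (.vert v x)
        (Fmap (fun v' => χV.symm v') (Gf T T' χV φbar)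
          (Fmap (fun v => χV v) φ (.vert v x))) ≤ ENNReal.ofReal A := by
    intro v x
    have hv2 : χV.symm (χV v) = v := χV.symm_apply_apply v
    show tdist T (.vert v x) (.vert (χV.symm (χV v))
      (φbar (χV.symm (χV v))
        (cast (congrArg T'.X (Equiv.apply_symm_apply χV (χV v)).symm) (φ v x)))) ≤ _
    rw [← vert_cast_eq T hv2 (congrArg T.X hv2)]
    refine le_trans (tdist_vert_le _ _ _) (ENNReal.ofReal_le_ofReal ?_)
    rw [gdist' (fun u => χV u) φbar hv2.symm rfl
      (Equiv.apply_symm_apply χV (χV v)).symm]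
    have h5 := (hinv v).1 x
    rw [dist_comm] at h5
    exact h5
  have near : ∀ p : T.Pt,
      tdist T p (Fmap (fun v' => χV.symm v') (Gf T T' χV φbar)
        (Fmap (fun v => χV v) φ p)) ≤ ENNReal.ofReal (1 + A) := by
    intro p
    cases p with
    | vert v x => exact le_trans (near_vert v x) (ENNReal.ofReal_le_ofReal (by linarith))
    | rung e x hx t ht0 ht1 =>
      refine tdist_le_two (a := t) (b := A) ?_ (near_vert (T.ι e) x) ht0.le hA (by linarith)
      exact tdist_le_chain (.single (PieceDist.bot_rung e x hx t ht0 ht1).symm)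
  -- coarse surjectivity onto vertex points
  have surj_vert : ∀ (v' : T'.V) (y : T'.X v'), ∃ p : T.Pt,
      tdist T' (.vert v' y) (Fmap (fun v => χV v) φ p) ≤ ENNReal.ofReal A := by
    intro v' y
    have hv : χV (χV.symm v') = v' := χV.apply_symm_apply v'
    refine ⟨.vert (χV.symm v') (φbar (χV.symm v')
      (cast (congrArg T'.X (Equiv.apply_symm_apply χV v').symm) y)), ?_⟩
    show tdist T' (.vert v' y) (.vert (χV (χV.symm v')) _) ≤ _
    rw [← vert_cast_eq T' hv (congrArg T'.X hv)]
    refine le_trans (tdist_vert_le _ _ _) (ENNReal.ofReal_le_ofReal ?_)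
    rw [gdist3 hv (congrArg T'.X hv) (congrArg T'.X hv.symm)]
    have h5 := (hinv (χV.symm v')).2 (cast (congrArg T'.X hv.symm) y)
    rw [dist_comm] at h5
    exact h5
  -- assemble
  refine ⟨M', A', Fmap (fun v => χV v) φ, hM'1, hA'0, ?_, ?_, ?_, fun v x => rfl⟩
  · -- upper bound
    intro p q
    simp only [tdist]
    refine ennreal_affine_le (ENNReal.ofReal_pos.mpr (by linarith)).ne'
      ENNReal.ofReal_ne_top _ (fun i => ?_)
    have hr0 : (0:ℝ) ≤ i.1 := i.2.nonneg
    rw [← ENNReal.ofReal_mul hM'0, ← ENNReal.ofReal_add (mul_nonneg hM'0 hr0) hA'0]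
    refine le_trans (fwd i.2) (ENNReal.ofReal_le_ofReal ?_)
    have e1 : K1 * i.1 ≤ M' * i.1 := by nlinarith
    have e2 : 2 * K1 + 1 + 4 * A ≤ A' := by rw [hA', hB1]; linarith
    linarith
  · -- lower bound
    intro p q
    conv_lhs => rw [show T.tdist p q = T.tdist p q from rfl]
    have key : ∀ i : {r : ℝ // ChainDist T' (Fmap (fun v => χV v) φ p)
        (Fmap (fun v => χV v) φ q) r},
        T.tdist p q ≤ ENNReal.ofReal M' * ENNReal.ofReal i.1 + ENNReal.ofReal A' := by
      intro i
      have hr0 : (0:ℝ) ≤ i.1 := i.2.nonneg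
      have step1 : tdist T (Fmap (fun v' => χV.symm v') (Gf T T' χV φbar)
          (Fmap (fun v => χV v) φ p)) q ≤
          ENNReal.ofReal ((K2 * i.1 + (2 * K2 + 1 + 4 * AA)) + (1 + A)) := by
        refine tdist_le_two (bwd i.2) ?_ (by nlinarith) (by linarith) le_rfl
        rw [tdist_comm]
        exact near q
      have step2 : T.tdist p q ≤
          ENNReal.ofReal ((1 + A) + ((K2 * i.1 + (2 * K2 + 1 + 4 * AA)) + (1 + A))) :=
        tdist_le_two (near p) step1 (by linarith) (by nlinarith) le_rfl
      rw [← ENNReal.ofReal_mul hM'0, ← ENNReal.ofReal_add (mul_nonneg hM'0 hr0) hA'0]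
      refine le_trans step2 (ENNReal.ofReal_le_ofReal ?_)
      have e1 : K2 * i.1 ≤ M' * i.1 := by nlinarith
      have e2 : (2 * K2 + 1 + 4 * AA) + 2 * (1 + A) ≤ A' := by rw [hA', hB2]; linarith
      linarith
    have := ennreal_affine_le (c := ENNReal.ofReal M')
      (ENNReal.ofReal_pos.mpr (by linarith)).ne' ENNReal.ofReal_ne_top
      (fun i : {r : ℝ // ChainDist T' (Fmap (fun v => χV v) φ p)
        (Fmap (fun v => χV v) φ q) r} => ENNReal.ofReal i.1) key
    exact this
  · -- coarse surjectivity
    intro q'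
    cases q' with
    | vert v' y =>
      obtain ⟨p, hp⟩ := surj_vert v' y
      refine ⟨p, hp.trans (ENNReal.ofReal_le_ofReal ?_)⟩
      rw [hA']; linarith
    | rung e' y hy t ht0 ht1 =>
      obtain ⟨p, hp⟩ := surj_vert (T'.ι e') y
      refine ⟨p, tdist_le_two (a := t) (b := A)
        (tdist_le_chain (.single (PieceDist.bot_rung e' y hy t ht0 ht1).symm)) hp
        ht0.le hA ?_⟩
      rw [hA']; linarith
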